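/- In the polynomial ring ℚ(t)[X, X₁, Y₁, Z₁] in four variables over the field ℚ(t), the intersection of ideals (X − t, X₁ − 1, Y₁) ∩ (X₁, Z₁ + Y₁) equals the ideal generated by the six polynomials (X − t)·X₁, X₁·(X₁ − 1), X₁·Y₁, (X − t)·(Z₁ + Y₁), X₁·Z₁ − (Z₁ + Y₁), and Y₁·(Z₁ + Y₁). -/
import Mathlib


open MvPolynomial

namespace DiffAlg

/-! ### Generic commutative-algebra notions -/

section Commutative

variable {R : Type*} [CommRing R]

/-- `I : S^∞`, the saturation of the ideal `I` by the multiplicative set generated by `S`. -/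
def sat (I : Ideal R) (S : Set R) : Set R :=
  {a | ∃ s ∈ Submonoid.closure S, s * a ∈ I}

/-- The ideal generated by `G` inside the subring whose carrier is the set `A`
(coefficients are taken from `A`), viewed as a set. -/
def spanIn (A G : Set R) : Set R :=
  {x | ∃ (m : ℕ) (c g : Fin m → R), (∀ i, c i ∈ A) ∧ (∀ i, g i ∈ G) ∧ x = ∑ i, c i * g i}

/-- The saturation `(G) : S^∞` computed inside the subring whose carrier is the set `A`. -/
def satIn (A G S : Set R) : Set R :=
  {x | x ∈ A ∧ ∃ s ∈ Submonoid.closure S, s * x ∈ spanIn A G}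

variable {ι : Type*}

/-- `I` is a differential ideal w.r.t. the family of derivations `D`. -/
def IsDiffIdeal (D : ι → R → R) (I : Ideal R) : Prop :=
  ∀ j, ∀ f ∈ I, D j f ∈ I

/-- `[F]`, the smallest differential ideal containing `F`. -/
def diffIdeal (D : ι → R → R) (F : Set R) : Ideal R :=
  sInf {I : Ideal R | F ⊆ I ∧ IsDiffIdeal D I}

/-- `{F}`, the smallest radical differential ideal containing `F`. -/
def radDiffIdeal (D : ι → R → R) (F : Set R) : Ideal R :=
  sInf {I : Ideal R | F ⊆ I ∧ IsDiffIdeal D I ∧ I.IsRadical}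

/-- A differential ideal for a single derivation. -/
def IsDiffIdeal1 (D : R → R) (I : Ideal R) : Prop := IsDiffIdeal (fun _ : Unit => D) I

/-- `[F]` for a single derivation. -/
def diffIdeal1 (D : R → R) (F : Set R) : Ideal R := diffIdeal (fun _ : Unit => D) F

/-- `{F}` for a single derivation. -/
def radDiffIdeal1 (D : R → R) (F : Set R) : Ideal R := radDiffIdeal (fun _ : Unit => D) F

end Commutative

/-! ### Leaders, initials, separants, autoreduced sets, characteristic sets,
for a polynomial ring whose variables carry a ranking `rle` and a
"proper derivative" relation `pd`. -/

section CharSets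

variable {k : Type*} [CommRing k] {σ : Type*} [DecidableEq σ]
variable (rle : σ → σ → Prop) (pd : σ → σ → Prop)

/-- The strict order associated with the ranking `rle`. -/
def rlt (u v : σ) : Prop := rle u v ∧ u ≠ v

/-- `u` is the leader of `f`: the highest ranked variable occurring in `f`. -/
def IsLeader (f : MvPolynomial σ k) (u : σ) : Prop :=
  u ∈ f.vars ∧ ∀ v ∈ f.vars, rle v u

/-- The leader of `f` (meaningful when `f` is not a constant). -/
noncomputable def leader [Nonempty σ] (f : MvPolynomial σ k) : σ :=
  Classical.epsilon (IsLeader rle f)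

/-- The initial of `f` w.r.t. the variable `u`: the leading coefficient of `f`
viewed as a univariate polynomial in `u`. -/
noncomputable def initial (u : σ) (f : MvPolynomial σ k) : MvPolynomial σ k :=
  ∑ m ∈ f.support.filter (fun m => m u = f.degreeOf u),
    monomial (m.erase u) (f.coeff m)

/-- The separant of `f`: `∂f/∂u_f`. -/
noncomputable def separant [Nonempty σ] (f : MvPolynomial σ k) : MvPolynomial σ k :=
  pderiv (leader rle f) f

/-- `H_A`: the product of the initials and separants of the elements of `A`. -/
noncomputable def Hset [Nonempty σ] (A : Finset (MvPolynomial σ k)) : MvPolynomial σ k :=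
  ∏ f ∈ A, initial (leader rle f) f * separant rle f

/-- The rank of a polynomial: its leader together with its degree in the leader. -/
noncomputable def rankOf [Nonempty σ] (f : MvPolynomial σ k) : σ × ℕ :=
  (leader rle f, f.degreeOf (leader rle f))

/-- Comparison of ranks: lower leader, or same leader and lower degree. -/
def rkLt (a b : σ × ℕ) : Prop := rlt rle a.1 b.1 ∨ (a.1 = b.1 ∧ a.2 < b.2)

/-- Ritt–Kolchin comparison of rank sequences listed in increasing rank;
a longer sequence with equal common prefix is lower, and the empty set is highest. -/
def seqLt : List (σ × ℕ) → List (σ × ℕ) → Prop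
  | [], _ => False
  | _ :: _, [] => True
  | a :: as, b :: bs => rkLt rle a b ∨ (a = b ∧ seqLt as bs)

def seqLe (A B : List (σ × ℕ)) : Prop := seqLt rle A B ∨ A = B

/-- `A` is of lower or equal rank than `B` in the Ritt–Kolchin sense. -/
def setRankLe [Nonempty σ] (A B : Finset (MvPolynomial σ k)) : Prop :=
  ∃ LA LB : List (MvPolynomial σ k),
    LA.Nodup ∧ LB.Nodup ∧ (∀ f, f ∈ LA ↔ f ∈ A) ∧ (∀ f, f ∈ LB ↔ f ∈ B) ∧
    (LA.map (rankOf rle)).Chain' (rkLt rle) ∧ (LB.map (rankOf rle)).Chain' (rkLt rle) ∧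
    seqLe rle (LA.map (rankOf rle)) (LB.map (rankOf rle))

/-- `f` is partially reduced w.r.t. `g`: no proper derivative of the leader of `g`
occurs in `f`. -/
def PartiallyReducedWrt [Nonempty σ] (f g : MvPolynomial σ k) : Prop :=
  ∀ v ∈ f.vars, ¬ pd v (leader rle g)

/-- `f` is reduced w.r.t. `g`. -/
def ReducedWrt [Nonempty σ] (f g : MvPolynomial σ k) : Prop :=
  PartiallyReducedWrt rle pd f g ∧ f.degreeOf (leader rle g) < g.degreeOf (leader rle g)

/-- `A` is a (differentially) autoreduced set. -/
def Autoreduced [Nonempty σ] (A : Finset (MvPolynomial σ k)) : Prop :=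
  (∀ f ∈ A, f.vars.Nonempty) ∧ ∀ f ∈ A, ∀ g ∈ A, f ≠ g → ReducedWrt rle pd f g

/-- `A` is a characteristic set (in Kolchin's sense) of the set `I`:
an autoreduced subset of `I` of lowest rank. -/
def IsCharSet [Nonempty σ] (I : Set (MvPolynomial σ k)) (A : Finset (MvPolynomial σ k)) : Prop :=
  Autoreduced rle pd A ∧ ↑A ⊆ I ∧
    ∀ B : Finset (MvPolynomial σ k), Autoreduced rle pd B → ↑B ⊆ I → setRankLe rle A B

/-- `A` is an algebraically autoreduced set (only the degree condition). -/
def AlgAutoreduced [Nonempty σ] (A : Finset (MvPolynomial σ k)) : Prop :=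
  (∀ f ∈ A, f.vars.Nonempty) ∧
    ∀ f ∈ A, ∀ g ∈ A, f ≠ g → f.degreeOf (leader rle g) < g.degreeOf (leader rle g)

/-- `A` is an algebraic characteristic set of the set `I`. -/
def IsAlgCharSet [Nonempty σ] (I : Set (MvPolynomial σ k)) (A : Finset (MvPolynomial σ k)) :
    Prop :=
  AlgAutoreduced rle A ∧ ↑A ⊆ I ∧
    ∀ B : Finset (MvPolynomial σ k), AlgAutoreduced rle B → ↑B ⊆ I → setRankLe rle A B

end CharSets

/-! ### The ordinary differential polynomial ring `k{y_1,…,y_l}` -/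

section Ordinary

variable {k : Type*} [CommRing k] {l : ℕ}

/-- The ordinary differential polynomial ring in `l` differential indeterminates:
the variable `(i, n)` represents `y_i^{(n)}`. -/
abbrev DP (k : Type*) [CommRing k] (l : ℕ) := MvPolynomial (Fin l × ℕ) k

/-- `δ` is a derivation of `k`. -/
structure IsFieldDeriv (δ : k → k) : Prop where
  map_add : ∀ a b, δ (a + b) = δ a + δ b
  leibniz : ∀ a b, δ (a * b) = a * δ b + b * δ a

/-- `D` is the derivation of `k{y_1,…,y_l}` extending `δ` with `D y_i^{(n)} = y_i^{(n+1)}`. -/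
structure IsDeriv (δ : k → k) (D : DP k l → DP k l) : Prop where
  map_add : ∀ f g, D (f + g) = D f + D g
  leibniz : ∀ f g, D (f * g) = f * D g + g * D f
  map_C : ∀ a : k, D (C a) = C (δ a)
  map_X : ∀ u : Fin l × ℕ, D (X u) = X (u.1, u.2 + 1)

/-- A ranking on the derivatives `y_i^{(n)}`. -/
structure Ranking (l : ℕ) where
  le : Fin l × ℕ → Fin l × ℕ → Prop
  le_refl : ∀ u, le u u
  le_antisymm : ∀ u v, le u v → le v u → u = v
  le_trans : ∀ u v w, le u v → le v w → le u w
  le_total : ∀ u v, le u v ∨ le v u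
  le_deriv : ∀ u : Fin l × ℕ, le u (u.1, u.2 + 1)
  deriv_mono : ∀ u v : Fin l × ℕ, le u v → le (u.1, u.2 + 1) (v.1, v.2 + 1)

/-- `v` is a proper derivative of `u` (ordinary case). -/
def properDeriv (v u : Fin l × ℕ) : Prop := v.1 = u.1 ∧ u.2 < v.2

/-- An orderly ranking: derivatives of strictly larger order are ranked strictly higher. -/
def Ranking.Orderly (r : Ranking l) : Prop :=
  ∀ u v : Fin l × ℕ, u.2 < v.2 → rlt r.le u v

/-- The order of an ordinary differential polynomial. -/
noncomputable def ordOf (f : DP k l) : ℕ := f.vars.sup fun v => v.2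

/-- The order of a finite set of differential polynomials: the sum of the orders. -/
noncomputable def ordSet (A : Finset (DP k l)) : ℕ := ∑ f ∈ A, ordOf f

/-- The elements of `A` together with their derivatives whose leader is ranked
strictly below `v`. -/
def lowerDerivs [Nonempty (Fin l)] (r : Ranking l) (D : DP k l → DP k l)
    (A : Finset (DP k l)) (v : Fin l × ℕ) : Set (DP k l) :=
  {p | ∃ g ∈ A, ∃ q : ℕ, p = D^[q] g ∧
    rlt r.le ((leader r.le g).1, (leader r.le g).2 + q) v}

/-- `A` is coherent (ordinary case). -/
def Coherent [Nonempty (Fin l)] (r : Ranking l) (D : DP k l → DP k l)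
    (A : Finset (DP k l)) : Prop :=
  ∀ f ∈ A, ∀ g ∈ A, ∀ v : Fin l × ℕ,
    v.1 = (leader r.le f).1 → v.1 = (leader r.le g).1 →
    (leader r.le f).2 ≤ v.2 → (leader r.le g).2 ≤ v.2 →
    separant r.le g * D^[v.2 - (leader r.le f).2] f
      - separant r.le f * D^[v.2 - (leader r.le g).2] g
      ∈ sat (Ideal.span (lowerDerivs r D A v)) {Hset r.le A}

end Ordinary

/-! ### The partial differential polynomial ring `k{y_1,…,y_l}`, derivations `δ_1,…,δ_n` -/

section Partial

variable {k : Type*} [CommRing k] {l n : ℕ}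

/-- The partial differential polynomial ring: the variable `(i, e)` represents
`δ_1^{e 1} ⋯ δ_n^{e n} y_i`. -/
abbrev PDP (k : Type*) [CommRing k] (l n : ℕ) := MvPolynomial (Fin l × (Fin n → ℕ)) k

/-- `D j` are the commuting derivations of `k{y_1,…,y_l}` extending the `δ j`. -/
structure IsPDeriv (δ : Fin n → k → k) (D : Fin n → PDP k l n → PDP k l n) : Prop where
  coeff_add : ∀ j a b, δ j (a + b) = δ j a + δ j b
  coeff_leibniz : ∀ j a b, δ j (a * b) = a * δ j b + b * δ j a
  map_add : ∀ j f g, D j (f + g) = D j f + D j g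
  leibniz : ∀ j f g, D j (f * g) = f * D j g + g * D j f
  map_C : ∀ j (a : k), D j (C a) = C (δ j a)
  map_X : ∀ j (u : Fin l × (Fin n → ℕ)), D j (X u) = X (u.1, u.2 + Pi.single j 1)
  comm : ∀ j j' f, D j (D j' f) = D j' (D j f)

/-- Apply the derivative operator `θ = δ_1^{θ 1} ⋯ δ_n^{θ n}`. -/
def applyTheta {R : Type*} (D : Fin n → R → R) (θ : Fin n → ℕ) (f : R) : R :=
  (List.finRange n).foldr (fun j g => (D j)^[θ j] g) f

/-- The order of a derivative. -/
def ordv (u : Fin l × (Fin n → ℕ)) : ℕ := ∑ j, u.2 j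

/-- A ranking on the derivatives `θ y_i` (partial case). -/
structure PRanking (l n : ℕ) where
  le : (Fin l × (Fin n → ℕ)) → (Fin l × (Fin n → ℕ)) → Prop
  le_refl : ∀ u, le u u
  le_antisymm : ∀ u v, le u v → le v u → u = v
  le_trans : ∀ u v w, le u v → le v w → le u w
  le_total : ∀ u v, le u v ∨ le v u
  le_deriv : ∀ u (j : Fin n), le u (u.1, u.2 + Pi.single j 1)
  deriv_mono : ∀ u v (j : Fin n), le u v → le (u.1, u.2 + Pi.single j 1) (v.1, v.2 + Pi.single j 1)

/-- An orderly ranking (partial case). -/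
def PRanking.Orderly (r : PRanking l n) : Prop :=
  ∀ u v, ordv u < ordv v → rlt r.le u v

/-- `v` is a proper derivative of `u` (partial case). -/
def pProperDeriv (v u : Fin l × (Fin n → ℕ)) : Prop :=
  v.1 = u.1 ∧ (∀ j, u.2 j ≤ v.2 j) ∧ u.2 ≠ v.2

/-- Elements of `A` and their derivatives whose leader is ranked strictly below `v`. -/
def plowerDerivs [Nonempty (Fin l)] (r : PRanking l n) (D : Fin n → PDP k l n → PDP k l n)
    (A : Finset (PDP k l n)) (v : Fin l × (Fin n → ℕ)) : Set (PDP k l n) :=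
  {p | ∃ g ∈ A, ∃ θ : Fin n → ℕ, p = applyTheta D θ g ∧
    rlt r.le ((leader r.le g).1, (leader r.le g).2 + θ) v}

/-- `A` is coherent (partial case). -/
def PCoherent [Nonempty (Fin l)] (r : PRanking l n) (D : Fin n → PDP k l n → PDP k l n)
    (A : Finset (PDP k l n)) : Prop :=
  ∀ f ∈ A, ∀ g ∈ A, ∀ v : Fin l × (Fin n → ℕ),
    v.1 = (leader r.le f).1 → v.1 = (leader r.le g).1 →
    (∀ j, (leader r.le f).2 j ≤ v.2 j) → (∀ j, (leader r.le g).2 j ≤ v.2 j) →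
    separant r.le g * applyTheta D (v.2 - (leader r.le f).2) f
      - separant r.le f * applyTheta D (v.2 - (leader r.le g).2) g
      ∈ sat (Ideal.span (plowerDerivs r D A v)) {Hset r.le A}

end Partial

/-- In `ℚ(t)[X, X₁, Y₁, Z₁]`, the intersection `(X − t, X₁ − 1, Y₁) ∩ (X₁, Z₁ + Y₁)` equals the
ideal generated by `(X − t)X₁`, `X₁(X₁ − 1)`, `X₁Y₁`, `(X − t)(Z₁ + Y₁)`,
`X₁Z₁ − (Z₁ + Y₁)` and `Y₁(Z₁ + Y₁)`. -/
theorem statement14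
    (X0 X1 Y1 Z1 : MvPolynomial (Fin 4) (RatFunc ℚ))
    (h0 : X0 = X (0 : Fin 4)) (h1 : X1 = X (1 : Fin 4))
    (h2 : Y1 = X (2 : Fin 4)) (h3 : Z1 = X (3 : Fin 4))
    (t : MvPolynomial (Fin 4) (RatFunc ℚ)) (ht : t = C RatFunc.X) :
    Ideal.span {X0 - t, X1 - 1, Y1} ⊓ Ideal.span {X1, Z1 + Y1} =
      Ideal.span {(X0 - t) * X1, X1 * (X1 - 1), X1 * Y1, (X0 - t) * (Z1 + Y1),
        X1 * Z1 - (Z1 + Y1), Y1 * (Z1 + Y1)} := by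
  clear h0 h1 h2 h3 ht
  set K := Ideal.span {(X0 - t) * X1, X1 * (X1 - 1), X1 * Y1, (X0 - t) * (Z1 + Y1),
    X1 * Z1 - (Z1 + Y1), Y1 * (Z1 + Y1)} with hK
  have hcop : Ideal.span {X0 - t, X1 - 1, Y1} ⊔ Ideal.span {X1, Z1 + Y1} = ⊤ := by
    rw [Ideal.eq_top_iff_one]
    have hx1 : X1 ∈ Ideal.span {X1, Z1 + Y1} := Ideal.subset_span (by simp)
    have hx1' : X1 - 1 ∈ Ideal.span {X0 - t, X1 - 1, Y1} := Ideal.subset_span (by simp)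
    have h := sub_mem (Ideal.mem_sup_right hx1) (Ideal.mem_sup_left hx1')
    simpa using h
  rw [← Ideal.mul_eq_inf_of_coprime hcop]
  apply le_antisymm
  · rw [Ideal.span_mul_span', Ideal.span_le]
    rintro x ⟨a, ha, b, hb, rfl⟩
    simp only [Set.mem_insert_iff, Set.mem_singleton_iff] at ha hb
    have g1 : (X0 - t) * X1 ∈ K := Ideal.subset_span (by simp)
    have g2 : X1 * (X1 - 1) ∈ K := Ideal.subset_span (by simp)
    have g3 : X1 * Y1 ∈ K := Ideal.subset_span (by simp)
    have g4 : (X0 - t) * (Z1 + Y1) ∈ K := Ideal.subset_span (by simp)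
    have g5 : X1 * Z1 - (Z1 + Y1) ∈ K := Ideal.subset_span (by simp)
    have g6 : Y1 * (Z1 + Y1) ∈ K := Ideal.subset_span (by simp)
    show a * b ∈ K
    rcases ha with ha | ha | ha <;> rcases hb with hb | hb <;> rw [ha, hb]
    · exact g1
    · exact g4
    · have h : (X1 - 1) * X1 = X1 * (X1 - 1) := by ring
      rw [h]; exact g2
    · have h : (X1 - 1) * (Z1 + Y1) = (X1 * Z1 - (Z1 + Y1)) + X1 * Y1 := by ring
      rw [h]; exact add_mem g5 g3
    · have h : Y1 * X1 = X1 * Y1 := by ring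
      rw [h]; exact g3
    · exact g6
  · rw [hK, Ideal.span_le]
    have a1 : X0 - t ∈ Ideal.span {X0 - t, X1 - 1, Y1} := Ideal.subset_span (by simp)
    have a2 : X1 - 1 ∈ Ideal.span {X0 - t, X1 - 1, Y1} := Ideal.subset_span (by simp)
    have a3 : Y1 ∈ Ideal.span {X0 - t, X1 - 1, Y1} := Ideal.subset_span (by simp)
    have b1 : X1 ∈ Ideal.span {X1, Z1 + Y1} := Ideal.subset_span (by simp)
    have b2 : Z1 + Y1 ∈ Ideal.span {X1, Z1 + Y1} := Ideal.subset_span (by simp)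
    rintro x (rfl | rfl | rfl | rfl | rfl | rfl)
    · exact Ideal.mul_mem_mul a1 b1
    · have : X1 * (X1 - 1) = (X1 - 1) * X1 := by ring
      rw [this]; exact Ideal.mul_mem_mul a2 b1
    · have : X1 * Y1 = Y1 * X1 := by ring
      rw [this]; exact Ideal.mul_mem_mul a3 b1
    · exact Ideal.mul_mem_mul a1 b2
    · have : X1 * Z1 - (Z1 + Y1) = (X1 - 1) * (Z1 + Y1) - Y1 * X1 := by ring
      rw [this]; exact sub_mem (Ideal.mul_mem_mul a2 b2) (Ideal.mul_mem_mul a3 b1)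
    · exact Ideal.mul_mem_mul a3 b2

end DiffAlg
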